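/- Let (Ā, B̄) be an interconnected structural system with subsystems (Ā_1, B̄_1), …, (Ā_r, B̄_r) and interconnection patterns Ē_{i,j}. Suppose there exist maximum matchings M_1, …, M_r of the state bipartite graphs B(Ā_1), …, B(Ā_r) such that: (1) for each subsystem j = 1,…,r, every non-top linked SCC of the system digraph D(Ā_j, B̄_j) consists of input vertices; and (2) the bipartite graph whose left vertices are ⋃_i U_L(M_i), whose right vertices are ⋃_i U_R(M_i), and whose edges go from a left-unmatched state vertex x_l of subsystem j to a right-unmatched state vertex x_k of subsystem i (i ≠ j) whenever (Ē_{i,j})_{k,l} = 1, admits a perfect matching. Then (Ā, B̄) is structurally controllable. -/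

import Mathlib

open Matrix

/-- Controllability matrix `[B, AB, …, A^{n-1}B]` (columns indexed by `Fin (card X) × U`). -/
def ctrbMatrix {X U : Type*} [Fintype X] [DecidableEq X]
    (A : Matrix X X ℝ) (B : Matrix X U ℝ) :
    Matrix X (Fin (Fintype.card X) × U) ℝ :=
  fun i kj => (A ^ (kj.1 : ℕ) * B) i kj.2

/-- A real pair `(A,B)` is controllable if its controllability matrix has full rank. -/
def Controllable {X U : Type*} [Fintype X] [DecidableEq X] [Fintype U]
    (A : Matrix X X ℝ) (B : Matrix X U ℝ) : Prop :=
  (ctrbMatrix A B).rank = Fintype.card X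

/-- `M` has the same sparsity pattern as the Boolean matrix `Mb`. -/
def SameSparsity {X Y : Type*} (M : Matrix X Y ℝ) (Mb : Matrix X Y Bool) : Prop :=
  ∀ i j, M i j = 0 ↔ Mb i j = false

/-- Structural controllability of a structural (Boolean) pair. -/
def StructurallyControllable {X U : Type*} [Fintype X] [DecidableEq X] [Fintype U]
    (Ab : Matrix X X Bool) (Bb : Matrix X U Bool) : Prop :=
  ∃ A : Matrix X X ℝ, ∃ B : Matrix X U ℝ,
    SameSparsity A Ab ∧ SameSparsity B Bb ∧ Controllable A B

/-- Edge relation of the system digraph `D(Ā,B̄)`. -/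
def sysDigraphRel {X U : Type*} (Ab : Matrix X X Bool) (Bb : Matrix X U Bool) :
    (X ⊕ U) → (X ⊕ U) → Prop :=
  fun v w => match v, w with
  | Sum.inl j, Sum.inl i => Ab i j = true
  | Sum.inr k, Sum.inl i => Bb i k = true
  | _, Sum.inr _ => False

/-- A state vertex is input-reachable if some input vertex has a directed path to it. -/
def InputReachable {X U : Type*} (Ab : Matrix X X Bool) (Bb : Matrix X U Bool) (x : X) : Prop :=
  ∃ u : U, Relation.ReflTransGen (sysDigraphRel Ab Bb) (Sum.inr u) (Sum.inl x)

/-- Edge relation of the system bipartite graph `B(Ā,B̄)` (left = states ⊕ inputs, right = states). -/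
def sysBipEdge {X U : Type*} (Ab : Matrix X X Bool) (Bb : Matrix X U Bool) :
    (X ⊕ U) → X → Prop :=
  fun v i => match v with
  | Sum.inl j => Ab i j = true
  | Sum.inr k => Bb i k = true

/-- Edge relation of the state bipartite graph `B(Ā)`. -/
def stateBipEdge {X : Type*} (Ab : Matrix X X Bool) : X → X → Prop :=
  fun j i => Ab i j = true

/-- A matching of a bipartite graph with edge relation `E`: a set of edges sharing no
left vertex and no right vertex. -/
def IsMatching {α β : Type*} (E : α → β → Prop) (M : Set (α × β)) : Prop :=
  (∀ e ∈ M, E e.1 e.2) ∧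
  (∀ e ∈ M, ∀ f ∈ M, e.1 = f.1 → e = f) ∧
  (∀ e ∈ M, ∀ f ∈ M, e.2 = f.2 → e = f)

/-- Right vertices belonging to no edge of `M`. -/
def rightUnmatched {α β : Type*} (M : Set (α × β)) : Set β :=
  {b | ∀ e ∈ M, e.2 ≠ b}

/-- Left vertices belonging to no edge of `M`. -/
def leftUnmatched {α β : Type*} (M : Set (α × β)) : Set α :=
  {a | ∀ e ∈ M, e.1 ≠ a}

/-- A maximum matching: a matching of the largest cardinality. -/
def IsMaxMatching {α β : Type*} (E : α → β → Prop) (M : Set (α × β)) : Prop :=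
  IsMatching E M ∧ ∀ M' : Set (α × β), IsMatching E M' → M'.ncard ≤ M.ncard

/-- `S` is a strongly connected component of the digraph with edge relation `R`. -/
def IsSCC {V : Type*} (R : V → V → Prop) (S : Set V) : Prop :=
  S.Nonempty ∧ (∀ u ∈ S, ∀ v ∈ S, Relation.ReflTransGen R u v) ∧
  ∀ w : V, (∀ u ∈ S, Relation.ReflTransGen R u w ∧ Relation.ReflTransGen R w u) → w ∈ S

/-- An SCC is non-top linked if it has no incoming edge from outside. -/
def NonTopLinked {V : Type*} (R : V → V → Prop) (S : Set V) : Prop :=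
  ∀ u v : V, R u v → v ∈ S → u ∈ S

/-- Dynamics pattern `(I_r ⊗ Ā') ∨ (Ē ⊗ H̄)` of a system of `r` similar subsystems. -/
def simA {n : ℕ} (r : ℕ) (A' H : Matrix (Fin n) (Fin n) Bool)
    (E : Matrix (Fin r) (Fin r) Bool) :
    Matrix (Fin r × Fin n) (Fin r × Fin n) Bool :=
  fun q q' => ((if q.1 = q'.1 then A' q.2 q'.2 else false) || (E q.1 q'.1 && H q.2 q'.2))

/-- Input pattern `I_r ⊗ B̄'` of a system of `r` similar subsystems. -/
def simB {n p : ℕ} (r : ℕ) (B' : Matrix (Fin n) (Fin p) Bool) :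
    Matrix (Fin r × Fin n) (Fin r × Fin p) Bool :=
  fun q k => if q.1 = k.1 then B' q.2 k.2 else false

/-- Entrywise OR of Boolean matrices. -/
def orMat {X Y : Type*} (M N : Matrix X Y Bool) : Matrix X Y Bool :=
  fun i j => M i j || N i j

/-- Dynamics pattern of an interconnected system: diagonal blocks `Ā_i`,
off-diagonal blocks `Ē_{i,j}`. -/
def interA {r : ℕ} {n : Fin r → ℕ}
    (A : ∀ i, Matrix (Fin (n i)) (Fin (n i)) Bool)
    (E : ∀ i j, Matrix (Fin (n i)) (Fin (n j)) Bool) :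
    Matrix (Σ i, Fin (n i)) (Σ i, Fin (n i)) Bool :=
  fun q q' => if h : q'.1 = q.1 then A q.1 q.2 (h ▸ q'.2) else E q.1 q'.1 q.2 q'.2

/-- Input pattern of an interconnected system: block diagonal with blocks `B̄_i`. -/
def interB {r : ℕ} {n p : Fin r → ℕ}
    (B : ∀ i, Matrix (Fin (n i)) (Fin (p i)) Bool) :
    Matrix (Σ i, Fin (n i)) (Σ i, Fin (p i)) Bool :=
  fun q k => if h : k.1 = q.1 then B q.1 q.2 (h ▸ k.2) else false

/-- Edge relation of the auxiliary bipartite graph of Lemma 3: an edge from the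
left-unmatched (w.r.t. `M j`) state vertex `x_l` of subsystem `j` to the right-unmatched
(w.r.t. `M i`) state vertex `x_k` of subsystem `i ≠ j` whenever `(Ē_{i,j})_{k,l} = 1`. -/
def crossEdge {r : ℕ} {n : Fin r → ℕ}
    (E : ∀ i j, Matrix (Fin (n i)) (Fin (n j)) Bool)
    (M : ∀ i, Set (Fin (n i) × Fin (n i))) :
    (Σ i, Fin (n i)) → (Σ i, Fin (n i)) → Prop :=
  fun l k => k.1 ≠ l.1 ∧ l.2 ∈ leftUnmatched (M l.1) ∧ k.2 ∈ rightUnmatched (M k.1) ∧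
    E k.1 l.1 k.2 l.2 = true


set_option linter.unusedSectionVars false
set_option maxHeartbeats 1000000
set_option linter.deprecated false

section PartIII
variable {Q U : Type*} [Fintype Q] [DecidableEq Q] [Fintype U]

lemma vecMul_pow_all {K : Type*} [Field K] (A : Matrix Q Q K) (B : Matrix Q U K) (y : Q → K)
    (h : ∀ k, k < Fintype.card Q → y ᵥ* (A ^ k * B) = 0) :
    ∀ k, y ᵥ* (A ^ k * B) = 0 := by
  cases isEmpty_or_nonempty Q with
  | inl hQ =>
    intro k
    funext u
    simp [Matrix.vecMul, dotProduct]
  | inr hQ =>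
    intro m
    by_cases hm : m < Fintype.card Q
    · exact h m hm
    have hmonic := A.charpoly_monic
    have hcard : 0 < Fintype.card Q := Fintype.card_pos
    set r := Polynomial.X ^ m %ₘ A.charpoly with hr
    have hdeg : r.natDegree < Fintype.card Q := by
      by_cases hr0 : r = 0
      · simpa [hr0] using hcard
      · have h1 : r.degree < A.charpoly.degree :=
          Polynomial.degree_modByMonic_lt _ hmonic
        have h3 : r.natDegree < A.charpoly.natDegree :=
          Polynomial.natDegree_lt_natDegree hr0 h1
        rwa [A.charpoly_natDegree_eq_dim] at h3
    have hpow : A ^ m = Polynomial.aeval A r := by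
      have h0 := congrArg (fun p => Polynomial.aeval A p)
        (Polynomial.modByMonic_add_div (Polynomial.X ^ m) A.charpoly)
      simp only [map_add, _root_.map_mul, Matrix.aeval_self_charpoly, zero_mul, add_zero,
        map_pow, Polynomial.aeval_X] at h0
      rw [← h0]
    rw [hpow, Polynomial.aeval_eq_sum_range' hdeg, Matrix.sum_mul]
    funext u
    have key : ∀ a, a < Fintype.card Q → ∑ q, y q * ((r.coeff a • A ^ a * B) q u) = 0 := by
      intro a ha
      have h1 := congrFun (h a ha) u
      simp only [Matrix.vecMul, dotProduct, Pi.zero_apply] at h1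
      calc ∑ q, y q * ((r.coeff a • A ^ a * B) q u)
          = ∑ q, r.coeff a * (y q * ((A ^ a * B) q u)) := by
            apply Finset.sum_congr rfl; intro q _
            simp only [Matrix.smul_mul, Matrix.smul_apply, smul_eq_mul]; ring
        _ = r.coeff a * ∑ q, y q * ((A ^ a * B) q u) := by rw [Finset.mul_sum]
        _ = 0 := by rw [h1, mul_zero]
    simp only [Matrix.vecMul, dotProduct, Pi.zero_apply, Matrix.sum_apply]
    simp_rw [Finset.mul_sum]
    rw [Finset.sum_comm]
    exact Finset.sum_eq_zero fun a ha => key a (Finset.mem_range.mp ha)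

theorem controllable_of_no_left_eigvec (A : Matrix Q Q ℝ) (B : Matrix Q U ℝ)
    (h : ∀ (lam : ℂ) (y : Q → ℂ),
      (∀ x, ∑ q, y q * (A q x : ℂ) = lam * y x) →
      (∀ u, ∑ q, y q * (B q u : ℂ) = 0) → y = 0) :
    Controllable A B := by
  by_contra hc
  have hrank : (ctrbMatrix A B).rank < Fintype.card Q :=
    lt_of_le_of_ne ((ctrbMatrix A B).rank_le_card_height) hc
  -- get a real left null vector
  obtain ⟨y, hy0, hyv⟩ : ∃ y : Q → ℝ, y ≠ 0 ∧ y ᵥ* (ctrbMatrix A B) = 0 := by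
    set C := ctrbMatrix A B
    have hrt : (Cᵀ).rank < Fintype.card Q := by rwa [Matrix.rank_transpose]
    have hrn := LinearMap.finrank_range_add_finrank_ker (Cᵀ).mulVecLin
    rw [Module.finrank_pi] at hrn
    have hker : LinearMap.ker (Cᵀ).mulVecLin ≠ ⊥ := by
      intro hbot
      rw [hbot, finrank_bot, add_zero] at hrn
      rw [Matrix.rank] at hrt
      omega
    obtain ⟨y, hym, hy0⟩ := Submodule.ne_bot_iff _ |>.mp hker
    refine ⟨y, hy0, ?_⟩
    have := LinearMap.mem_ker.mp hym
    rw [Matrix.mulVecLin_apply, Matrix.mulVec_transpose] at this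
    exact this
  -- complexify
  set Ac := A.map (Complex.ofRealHom : ℝ → ℂ) with hAc
  set Bc := B.map (Complex.ofRealHom : ℝ → ℂ) with hBc
  set yc : Q → ℂ := fun q => ((y q : ℝ) : ℂ) with hyc
  have hmapow : ∀ k : ℕ, (A ^ k).map (Complex.ofRealHom : ℝ → ℂ) = Ac ^ k := by
    intro k
    have := map_pow (Complex.ofRealHom.mapMatrix (m := Q)) A k
    simpa [RingHom.mapMatrix_apply] using this
  have hyck : ∀ k, yc ᵥ* (Ac ^ k * Bc) = 0 := by
    have hreal : ∀ k, k < Fintype.card Q → y ᵥ* (A ^ k * B) = 0 := by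
      intro k hk
      funext u
      have := congrFun hyv (⟨k, hk⟩, u)
      simpa [ctrbMatrix, Matrix.vecMul, dotProduct] using this
    have hallk := vecMul_pow_all A B y hreal
    intro k
    funext u
    have h1 := congrFun (hallk k) u
    have h2 : (Ac ^ k * Bc) = ((A ^ k * B).map (Complex.ofRealHom : ℝ → ℂ)) := by
      rw [Matrix.map_mul, hmapow]
    rw [h2]
    simp only [Matrix.vecMul, dotProduct, Pi.zero_apply] at h1 ⊢
    rw [hyc]
    push_cast
    rw [show ∑ q, (y q : ℂ) * ((A ^ k * B).map (Complex.ofRealHom : ℝ → ℂ)) q u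
        = ((∑ q, y q * (A ^ k * B) q u : ℝ) : ℂ) by push_cast [Matrix.map_apply]; rfl, h1]
    norm_num
  -- the invariant subspace
  let Y : Submodule ℂ (Q → ℂ) :=
    { carrier := {z | ∀ k, z ᵥ* (Ac ^ k * Bc) = 0}
      add_mem' := by
        intro a b ha hb k
        rw [Matrix.add_vecMul, ha k, hb k, add_zero]
      zero_mem' := by
        intro k
        rw [Matrix.zero_vecMul]
      smul_mem' := by
        intro c a ha k
        rw [Matrix.smul_vecMul, ha k, smul_zero] }
  have hycY : yc ∈ Y := hyck
  have hyc0 : yc ≠ 0 := by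
    intro hz
    apply hy0
    funext q
    have := congrFun hz q
    simpa [hyc] using this
  have hmaps : ∀ z ∈ Y, Ac.vecMulLinear z ∈ Y := by
    intro z hz k
    rw [Matrix.vecMulLinear_apply, Matrix.vecMul_vecMul, ← Matrix.mul_assoc, ← pow_succ']
    exact hz (k + 1)
  let T : Module.End ℂ Y := (Ac.vecMulLinear).restrict hmaps
  haveI : Nontrivial Y := Submodule.nontrivial_iff_ne_bot.mpr (by
    intro hbot
    exact hyc0 (by simpa [hbot] using (Submodule.mem_bot ℂ).mp (hbot ▸ hycY)))
  obtain ⟨μ, hμ⟩ := Module.End.exists_eigenvalue T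
  obtain ⟨v, hv⟩ := hμ.exists_hasEigenvector
  have hveq : (v : Q → ℂ) ᵥ* Ac = μ • (v : Q → ℂ) := by
    have := hv.apply_eq_smul
    have h2 := congrArg (Subtype.val) this
    rw [LinearMap.restrict_coe_apply] at h2
    rw [Matrix.vecMulLinear_apply] at h2
    simpa using h2
  have hz := h μ (v : Q → ℂ) (by
      intro x
      have := congrFun hveq x
      simpa [Matrix.vecMul, dotProduct, hAc, Matrix.map_apply, mul_comm] using this)
    (by
      intro u
      have hY := v.2
      have h0 := hY 0
      rw [pow_zero, Matrix.one_mul] at h0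
      have := congrFun h0 u
      simpa [Matrix.vecMul, dotProduct, hBc, Matrix.map_apply] using this)
  exact hv.right (Submodule.coe_eq_zero.mp hz)

end PartIII

namespace SCWitness
attribute [local instance 10] Classical.propDecidable

variable {Q : Type*} [Fintype Q] [DecidableEq Q]

/-- Orbit of `q` under the permutation `σ`, as a `Finset`. -/
noncomputable def orb (σ : Equiv.Perm Q) (q : Q) : Finset Q :=
  (Finset.range (orderOf σ)).image (fun k => (σ ^ k) q)

lemma mem_orb_iff {σ : Equiv.Perm Q} {q z : Q} : z ∈ orb σ q ↔ ∃ k : ℕ, (σ ^ k) q = z := by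
  constructor
  · rintro h
    rw [orb, Finset.mem_image] at h
    obtain ⟨k, -, hk⟩ := h
    exact ⟨k, hk⟩
  · rintro ⟨k, hk⟩
    rw [orb, Finset.mem_image]
    refine ⟨k % orderOf σ, Finset.mem_range.mpr (Nat.mod_lt _ (orderOf_pos σ)), ?_⟩
    rw [pow_mod_orderOf]
    exact hk

lemma orb_self (σ : Equiv.Perm Q) (q : Q) : q ∈ orb σ q :=
  mem_orb_iff.mpr ⟨0, rfl⟩

lemma orb_nonempty (σ : Equiv.Perm Q) (q : Q) : (orb σ q).Nonempty := ⟨q, orb_self σ q⟩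

lemma mem_orb_symm {σ : Equiv.Perm Q} {q z : Q} (h : z ∈ orb σ q) : q ∈ orb σ z := by
  rw [mem_orb_iff] at h ⊢
  obtain ⟨k, hk⟩ := h
  set o := orderOf σ with ho
  have hpos := orderOf_pos σ
  refine ⟨o - k % o, ?_⟩
  have h1 : (σ ^ (k % o)) q = z := by rw [pow_mod_orderOf]; exact hk
  have h2 : (σ ^ (o - k % o)) ((σ ^ (k % o)) q) = (σ ^ (o - k % o + k % o)) q := by
    rw [pow_add]; rfl
  rw [h1] at h2
  rw [h2, Nat.sub_add_cancel (le_of_lt (Nat.mod_lt _ hpos)), pow_orderOf_eq_one]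
  rfl

lemma orb_eq_of_mem {σ : Equiv.Perm Q} {q z : Q} (h : z ∈ orb σ q) : orb σ z = orb σ q := by
  have hsymm := mem_orb_symm h
  apply Finset.Subset.antisymm <;>
  · intro w hw
    rw [mem_orb_iff] at hw ⊢
    obtain ⟨k, hk⟩ := hw
    first
    | (obtain ⟨m, hm⟩ := mem_orb_iff.mp h
       exact ⟨k + m, by rw [pow_add]; simp only [Equiv.Perm.coe_mul, Function.comp_apply]; rw [hm, hk]⟩)
    | (obtain ⟨m, hm⟩ := mem_orb_iff.mp hsymm
       exact ⟨k + m, by rw [pow_add]; simp only [Equiv.Perm.coe_mul, Function.comp_apply]; rw [hm, hk]⟩)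

lemma orb_apply (σ : Equiv.Perm Q) (q : Q) : orb σ (σ q) = orb σ q :=
  orb_eq_of_mem (mem_orb_iff.mpr ⟨1, by simp⟩)

/-- Minimal positive period of `q` under `σ`. -/
noncomputable def period (σ : Equiv.Perm Q) (q : Q) : ℕ :=
  Nat.find (⟨orderOf σ, orderOf_pos σ, by rw [pow_orderOf_eq_one]; rfl⟩ :
    ∃ k, 0 < k ∧ (σ ^ k) q = q)

lemma period_spec (σ : Equiv.Perm Q) (q : Q) :
    0 < period σ q ∧ (σ ^ period σ q) q = q :=
  Nat.find_spec (⟨orderOf σ, orderOf_pos σ, by rw [pow_orderOf_eq_one]; rfl⟩ :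
    ∃ k, 0 < k ∧ (σ ^ k) q = q)

lemma period_min {σ : Equiv.Perm Q} {q : Q} {k : ℕ} (h1 : 0 < k) (h2 : k < period σ q) :
    (σ ^ k) q ≠ q := by
  intro hk
  exact Nat.find_min (⟨orderOf σ, orderOf_pos σ, by rw [pow_orderOf_eq_one]; rfl⟩ :
    ∃ k, 0 < k ∧ (σ ^ k) q = q) h2 ⟨h1, hk⟩

lemma pow_mul_period_add (σ : Equiv.Perm Q) (q : Q) (m k : ℕ) :
    (σ ^ (m * period σ q + k)) q = (σ ^ k) q := by
  induction m with
  | zero => simp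
  | succ m ih =>
    have : (m + 1) * period σ q + k = (m * period σ q + k) + period σ q := by ring
    rw [this, pow_add]
    simp only [Equiv.Perm.coe_mul, Function.comp_apply]
    rw [(period_spec σ q).2, ih]

lemma pow_mod_period (σ : Equiv.Perm Q) (q : Q) (k : ℕ) :
    (σ ^ k) q = (σ ^ (k % period σ q)) q := by
  conv_lhs => rw [show k = k / period σ q * period σ q + k % period σ q by rw [Nat.mul_comm]; exact (Nat.div_add_mod k _).symm]
  rw [pow_mul_period_add]

lemma orb_eq_image_range_period (σ : Equiv.Perm Q) (q : Q) :
    orb σ q = (Finset.range (period σ q)).image (fun k => (σ ^ k) q) := by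
  apply Finset.Subset.antisymm
  · intro z hz
    obtain ⟨k, hk⟩ := mem_orb_iff.mp hz
    rw [Finset.mem_image]
    exact ⟨k % period σ q, Finset.mem_range.mpr (Nat.mod_lt _ (period_spec σ q).1),
      by rw [← pow_mod_period]; exact hk⟩
  · intro z hz
    rw [Finset.mem_image] at hz
    obtain ⟨k, -, hk⟩ := hz
    exact mem_orb_iff.mpr ⟨k, hk⟩

lemma pow_sub_cancel {σ : Equiv.Perm Q} {q : Q} {i j : ℕ} (hij : i ≤ j)
    (h : (σ ^ i) q = (σ ^ j) q) : (σ ^ (j - i)) q = q := by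
  have h2 : (σ ^ i) ((σ ^ (j - i)) q) = (σ ^ i) q := by
    rw [show (σ ^ i) ((σ ^ (j-i)) q) = (σ ^ (i + (j - i))) q by rw [pow_add]; rfl]
    rw [Nat.add_sub_cancel' hij, h]
  exact (σ ^ i).injective h2

lemma card_orb (σ : Equiv.Perm Q) (q : Q) : (orb σ q).card = period σ q := by
  rw [orb_eq_image_range_period]
  rw [Finset.card_image_of_injOn, Finset.card_range]
  intro i hi j hj hij
  rw [Finset.mem_coe, Finset.mem_range] at hi hj
  rcases le_total i j with h | h
  · by_contra hne
    have h1 : 0 < j - i := by omega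
    exact period_min h1 (by omega) (pow_sub_cancel h hij)
  · by_contra hne
    have h1 : 0 < i - j := by omega
    exact period_min h1 (by omega) (pow_sub_cancel h hij.symm)

lemma mem_orb_iff_lt {σ : Equiv.Perm Q} {q z : Q} :
    z ∈ orb σ q ↔ ∃ k, k < (orb σ q).card ∧ (σ ^ k) q = z := by
  rw [card_orb]
  constructor
  · intro h
    obtain ⟨k, hk⟩ := mem_orb_iff.mp h
    exact ⟨k % period σ q, Nat.mod_lt _ (period_spec σ q).1, by rw [← pow_mod_period]; exact hk⟩
  · rintro ⟨k, -, hk⟩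
    exact mem_orb_iff.mpr ⟨k, hk⟩

lemma pow_card_orb (σ : Equiv.Perm Q) (q : Q) : (σ ^ (orb σ q).card) q = q := by
  rw [card_orb]
  exact (period_spec σ q).2

lemma card_orb_pos (σ : Equiv.Perm Q) (q : Q) : 0 < (orb σ q).card := by
  rw [card_orb]; exact (period_spec σ q).1


/-- reachability from an input in exactly `n` state-edge steps -/
def ReachN {Q U : Type*} (Ap : Q → Q → Bool) (Bp : Q → U → Bool) : ℕ → Q → Prop
  | 0, q => ∃ u, Bp q u = true
  | n+1, q => ∃ q', ReachN Ap Bp n q' ∧ Ap q q' = true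

/-- Data for the witness construction. -/
structure WData (Q U : Type*) where
  Ap : Q → Q → Bool
  Bp : Q → U → Bool
  sg : Equiv.Perm Q
  hsg : ∀ q, Ap (sg q) q = true
  hre : ∀ q, ∃ n, ReachN Ap Bp n q
  f : Q → ℕ
  hf : Function.Injective f

variable {Q U : Type*} [Fintype Q] [DecidableEq Q] [LinearOrder Q] [Fintype U]

namespace WData

variable (W : WData Q U)

noncomputable def dist (q : Q) : ℕ := Nat.find (W.hre q)

lemma reach_dist (q : Q) : ReachN W.Ap W.Bp (W.dist q) q := Nat.find_spec (W.hre q)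

lemma dist_le {n : ℕ} {q : Q} (h : ReachN W.Ap W.Bp n q) : W.dist q ≤ n :=
  Nat.find_min' (W.hre q) h

noncomputable def hd (q : Q) : Q :=
  (((orb W.sg q).filter (fun x => ∀ z ∈ orb W.sg q, W.dist x ≤ W.dist z)).min).getD q

lemma hd_spec (q : Q) : W.hd q ∈ orb W.sg q ∧ ∀ z ∈ orb W.sg q, W.dist (W.hd q) ≤ W.dist z := by
  obtain ⟨x, hx, hmin⟩ := Finset.exists_min_image (orb W.sg q) W.dist (orb_nonempty _ _)
  have hxf : x ∈ (orb W.sg q).filter (fun x => ∀ z ∈ orb W.sg q, W.dist x ≤ W.dist z) :=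
    Finset.mem_filter.mpr ⟨hx, hmin⟩
  obtain ⟨m, hm⟩ := Finset.min_of_mem hxf
  have hhd : W.hd q = m := by rw [hd, hm]; rfl
  have hmf := Finset.mem_of_min hm
  rw [Finset.mem_filter] at hmf
  rw [hhd]
  exact ⟨hmf.1, hmf.2⟩

lemma hd_inv {q q' : Q} (h : orb W.sg q' = orb W.sg q) : W.hd q' = W.hd q := by
  obtain ⟨x, hx, hmin⟩ := Finset.exists_min_image (orb W.sg q) W.dist (orb_nonempty _ _)
  have hxf : x ∈ (orb W.sg q).filter (fun x => ∀ z ∈ orb W.sg q, W.dist x ≤ W.dist z) :=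
    Finset.mem_filter.mpr ⟨hx, hmin⟩
  obtain ⟨m, hm⟩ := Finset.min_of_mem hxf
  rw [hd, hd, h, hm]
  rfl

lemma hd_idem (q : Q) : W.hd (W.hd q) = W.hd q :=
  W.hd_inv (orb_eq_of_mem (W.hd_spec q).1)

noncomputable def srcAux (x : Q) : Q ⊕ U :=
  if h0 : W.dist x = 0 then
    Sum.inr (Classical.choose (show ∃ u, W.Bp x u = true by
      have h := W.reach_dist x; rw [h0] at h; exact h))
  else
    Sum.inl (Classical.choose (show ∃ q', ReachN W.Ap W.Bp (W.dist x - 1) q' ∧ W.Ap x q' = true by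
      have h := W.reach_dist x
      rcases hn : W.dist x with _ | n
      · exact absurd hn h0
      · rw [hn] at h
        simpa [ReachN] using h))

lemma srcAux_inr {x : Q} {u : U} (h : W.srcAux x = Sum.inr u) : W.Bp x u = true := by
  rw [srcAux] at h
  split_ifs at h with h0
  rw [← Sum.inr.inj h]
  exact Classical.choose_spec (show ∃ u, W.Bp x u = true by
    have h := W.reach_dist x; rw [h0] at h; exact h)

lemma srcAux_inl {x p : Q} (h : W.srcAux x = Sum.inl p) :
    W.Ap x p = true ∧ W.dist p < W.dist x := by
  rw [srcAux] at h
  split_ifs at h with h0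
  rw [← Sum.inl.inj h]
  have hspec := Classical.choose_spec
    (show ∃ q', ReachN W.Ap W.Bp (W.dist x - 1) q' ∧ W.Ap x q' = true by
      have h := W.reach_dist x
      rcases hn : W.dist x with _ | n
      · exact absurd hn h0
      · rw [hn] at h
        simpa [ReachN] using h)
  refine ⟨hspec.2, ?_⟩
  have := W.dist_le hspec.1
  omega

noncomputable def src (q : Q) : Q ⊕ U := W.srcAux (W.hd q)

lemma src_inv {q q' : Q} (h : orb W.sg q' = orb W.sg q) : W.src q' = W.src q := by
  rw [src, src, W.hd_inv h]

noncomputable def rep (q : Q) : Q := ((orb W.sg q).min).getD q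

lemma rep_mem (q : Q) : W.rep q ∈ orb W.sg q := by
  obtain ⟨m, hm⟩ := Finset.min_of_mem (orb_self W.sg q)
  have : W.rep q = m := by rw [rep, hm]; rfl
  rw [this]
  exact Finset.mem_of_min hm

lemma rep_inv {q q' : Q} (h : orb W.sg q' = orb W.sg q) : W.rep q' = W.rep q := by
  obtain ⟨m, hm⟩ := Finset.min_of_mem (orb_self W.sg q)
  rw [rep, rep, h, hm]
  rfl

noncomputable def c (q : Q) : ℝ := (W.f (W.rep q) : ℝ) + 2

lemma c_pos (q : Q) : 0 < W.c q := by
  rw [c]; positivity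

lemma c_inv {q q' : Q} (h : orb W.sg q' = orb W.sg q) : W.c q' = W.c q := by
  rw [c, c, W.rep_inv h]

lemma orb_eq_of_c_eq {q q' : Q} (h : W.c q = W.c q') : orb W.sg q = orb W.sg q' := by
  rw [c, c] at h
  have h2 : W.f (W.rep q) = W.f (W.rep q') := by exact_mod_cast (by linarith : (W.f (W.rep q) : ℝ) = W.f (W.rep q'))
  have h3 : W.rep q = W.rep q' := W.hf h2
  have h4 := orb_eq_of_mem (W.rep_mem q)
  have h5 := orb_eq_of_mem (W.rep_mem q')
  rw [← h4, h3, h5]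

noncomputable def A0 : Matrix Q Q ℝ := fun x z =>
  (if x = W.sg z then W.c z else 0) + (if x = W.hd x ∧ W.src x = Sum.inl z then 1 else 0)

noncomputable def B0 : Matrix Q U ℝ := fun x u =>
  if x = W.hd x ∧ W.src x = Sum.inr u then 1 else 0

lemma A0_support {x z : Q} (h : W.A0 x z ≠ 0) : W.Ap x z = true := by
  rw [A0] at h
  by_cases h1 : x = W.sg z
  · rw [h1]; exact W.hsg z
  · simp only [h1, if_false, zero_add] at h
    by_cases h2 : x = W.hd x ∧ W.src x = Sum.inl z
    · have := W.srcAux_inl (x := W.hd x) (p := z) h2.2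
      rw [← h2.1] at this
      exact this.1
    · simp [h2] at h

lemma B0_support {x : Q} {u : U} (h : W.B0 x u ≠ 0) : W.Bp x u = true := by
  rw [B0] at h
  by_cases h2 : x = W.hd x ∧ W.src x = Sum.inr u
  · have := W.srcAux_inr (x := W.hd x) (u := u) h2.2
    rw [← h2.1] at this
    exact this
  · simp [h2] at h


noncomputable def chain (q0 : Q) : ℕ → Q ⊕ U
  | 0 => Sum.inl (W.hd q0)
  | k+1 => match chain q0 k with
    | Sum.inl p => W.src p
    | Sum.inr u => Sum.inr u

lemma chain_zero (q0 : Q) : W.chain q0 0 = Sum.inl (W.hd q0) := rfl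

lemma chain_succ_inl {q0 : Q} {k : ℕ} {p : Q} (h : W.chain q0 k = Sum.inl p) :
    W.chain q0 (k+1) = W.src p := by
  rw [chain, h]

lemma chain_succ_inr {q0 : Q} {k : ℕ} {u : U} (h : W.chain q0 k = Sum.inr u) :
    W.chain q0 (k+1) = Sum.inr u := by
  rw [chain, h]

lemma src_inl_hd_dist {q p : Q} (h : W.src q = Sum.inl p) :
    W.dist (W.hd p) < W.dist (W.hd q) := by
  rw [src] at h
  have h1 := W.srcAux_inl h
  have h2 : W.dist (W.hd p) ≤ W.dist p := (W.hd_spec p).2 p (orb_self _ _)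
  omega

lemma chain_dist {q0 : Q} {k : ℕ} {p p' : Q} (h : W.chain q0 k = Sum.inl p)
    (h' : W.chain q0 (k+1) = Sum.inl p') : W.dist (W.hd p') < W.dist (W.hd p) := by
  have h2 := W.chain_succ_inl h
  rw [h2] at h'
  exact W.src_inl_hd_dist h'

lemma chain_mono {q0 : Q} : ∀ {j k : ℕ}, j < k → ∀ {p p' : Q}, W.chain q0 j = Sum.inl p →
    W.chain q0 k = Sum.inl p' → W.dist (W.hd p') < W.dist (W.hd p) := by
  intro j k
  induction k with
  | zero => intro h; exact absurd h (Nat.not_lt_zero j)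
  | succ k ih =>
    intro hjk p p' hj hk
    rcases Nat.lt_or_ge j k with hlt | hge
    · cases hck : W.chain q0 k with
      | inl p'' => exact lt_trans (W.chain_dist hck hk) (ih hlt hj hck)
      | inr u => rw [W.chain_succ_inr hck] at hk; cases hk
    · have hjk2 : j = k := by omega
      subst hjk2
      exact W.chain_dist hj hk

lemma chain_inr_stable {q0 : Q} {k : ℕ} {u : U} (h : W.chain q0 k = Sum.inr u) :
    ∀ j, k ≤ j → W.chain q0 j = Sum.inr u := by
  intro j hj
  induction j with
  | zero =>
    have hk0 : k = 0 := by omega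
    subst hk0; exact h
  | succ j ih =>
    rcases Nat.lt_or_ge j k with hlt | hge
    · have hk0 : k = j + 1 := by omega
      subst hk0; exact h
    · exact W.chain_succ_inr (ih hge)

lemma orb_index_unique {q0 : Q} {j k : ℕ} {p p' : Q} (hj : W.chain q0 j = Sum.inl p)
    (hk : W.chain q0 k = Sum.inl p') (horb : orb W.sg p = orb W.sg p') : j = k := by
  have hhd : W.hd p = W.hd p' := (W.hd_inv horb.symm).symm
  rcases lt_trichotomy j k with h | h | h
  · have := W.chain_mono h hj hk
    rw [hhd] at this
    omega
  · exact h
  · have := W.chain_mono h hk hj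
    rw [hhd] at this
    omega

lemma chain_root (q0 : Q) : ∃ K p u, W.chain q0 K = Sum.inl p ∧ W.chain q0 (K+1) = Sum.inr u ∧
    ∀ j, j ≤ K → ∃ p', W.chain q0 j = Sum.inl p' := by
  by_cases hex : ∃ k, ∃ u : U, W.chain q0 k = Sum.inr u
  · obtain ⟨u, hu⟩ := Nat.find_spec hex
    have hk1min := fun j (hj : j < Nat.find hex) => Nat.find_min hex hj
    have hk1pos : Nat.find hex ≠ 0 := by
      intro h0
      rw [h0, W.chain_zero q0] at hu
      cases hu
    have hKlt : Nat.find hex - 1 < Nat.find hex := by omega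
    cases hcK : W.chain q0 (Nat.find hex - 1) with
    | inr u' => exact absurd ⟨u', hcK⟩ (hk1min _ hKlt)
    | inl p =>
      refine ⟨Nat.find hex - 1, p, u, hcK, ?_, ?_⟩
      · rw [show Nat.find hex - 1 + 1 = Nat.find hex by omega]
        exact hu
      · intro j hj
        cases hcj : W.chain q0 j with
        | inl p' => exact ⟨p', rfl⟩
        | inr u' => exact absurd ⟨u', hcj⟩ (hk1min j (by omega))
  · push_neg at hex
    have hall : ∀ k, ∃ p, W.chain q0 k = Sum.inl p := by
      intro k
      cases hck : W.chain q0 k with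
      | inl p => exact ⟨p, rfl⟩
      | inr u => exact absurd hck (hex k u)
    choose pf hpf using hall
    have hdec : ∀ k, W.dist (W.hd (pf (k+1))) < W.dist (W.hd (pf k)) :=
      fun k => W.chain_dist (hpf k) (hpf (k+1))
    have hbound : ∀ k, W.dist (W.hd (pf k)) + k ≤ W.dist (W.hd (pf 0)) := by
      intro k
      induction k with
      | zero => omega
      | succ k ih =>
        have := hdec k
        omega
    have := hbound (W.dist (W.hd (pf 0)) + 1)
    omega

theorem main_eig (lam : ℂ) (y : Q → ℂ)
    (heig : ∀ x, ∑ q, y q * ((W.A0 q x : ℝ) : ℂ) = lam * y x)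
    (hB : ∀ u, ∑ q, y q * ((W.B0 q u : ℝ) : ℂ) = 0) :
    y = 0 := by
  classical
  set H : Q → ℂ := fun x =>
    ∑ h ∈ Finset.univ.filter (fun h => h = W.hd h ∧ W.src h = Sum.inl x), y h with hHdef
  have hc0 : ∀ q : Q, ((W.c q : ℝ) : ℂ) ≠ 0 :=
    fun q => Complex.ofReal_ne_zero.mpr (ne_of_gt (W.c_pos q))
  -- the basic recurrence
  have heq : ∀ x, lam * y x = ((W.c x : ℝ) : ℂ) * y (W.sg x) + H x := by
    intro x
    rw [← heig x]
    have hsplit : ∀ q : Q, y q * ((W.A0 q x : ℝ) : ℂ)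
        = (if q = W.sg x then y q * ((W.c x : ℝ) : ℂ) else 0)
          + (if q = W.hd q ∧ W.src q = Sum.inl x then y q else 0) := by
      intro q
      simp only [WData.A0]
      by_cases h1 : q = W.sg x
      · by_cases h2 : q = W.hd q ∧ W.src q = Sum.inl x
        · rw [if_pos h1, if_pos h2, if_pos h1, if_pos h2]
          push_cast
          ring
        · rw [if_pos h1, if_neg h2, if_pos h1, if_neg h2]
          push_cast
          ring
      · by_cases h2 : q = W.hd q ∧ W.src q = Sum.inl x
        · rw [if_neg h1, if_pos h2, if_neg h1, if_pos h2]
          push_cast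
          ring
        · rw [if_neg h1, if_neg h2, if_neg h1, if_neg h2]
          push_cast
          ring
    rw [Finset.sum_congr rfl (fun q _ => hsplit q), Finset.sum_add_distrib,
      Finset.sum_ite_eq' Finset.univ (W.sg x) (fun q => y q * ((W.c x : ℝ) : ℂ))]
    simp only [Finset.mem_univ, if_true, hHdef]
    rw [mul_comm (y (W.sg x))]
    congr 1
    rw [Finset.sum_filter]
  -- iterate the homogeneous recurrence
  have iter : ∀ x, (∀ z ∈ orb W.sg x, H z = 0) → ∀ k : ℕ,
      lam ^ k * y x = ((W.c x : ℝ) : ℂ) ^ k * y ((W.sg ^ k) x) := by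
    intro x hx k
    induction k with
    | zero => simp
    | succ k ih =>
      have hmem : (W.sg ^ k) x ∈ orb W.sg x := mem_orb_iff.mpr ⟨k, rfl⟩
      have hcx : W.c ((W.sg ^ k) x) = W.c x := W.c_inv (orb_eq_of_mem hmem)
      have hstep := heq ((W.sg ^ k) x)
      rw [hx _ hmem, add_zero, hcx] at hstep
      have hpow : (W.sg ^ (k+1)) x = W.sg ((W.sg ^ k) x) := by
        rw [pow_succ']; rfl
      rw [hpow]
      calc lam ^ (k+1) * y x = lam * (lam ^ k * y x) := by ring
        _ = lam * (((W.c x : ℝ) : ℂ) ^ k * y ((W.sg ^ k) x)) := by rw [ih]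
        _ = ((W.c x : ℝ) : ℂ) ^ k * (lam * y ((W.sg ^ k) x)) := by ring
        _ = ((W.c x : ℝ) : ℂ) ^ k * (((W.c x : ℝ) : ℂ) * y (W.sg ((W.sg ^ k) x))) := by
            rw [hstep]
        _ = ((W.c x : ℝ) : ℂ) ^ (k+1) * y (W.sg ((W.sg ^ k) x)) := by ring
  -- vanishing on non-resonant orbits with no source
  have vanish : ∀ x, (∀ z ∈ orb W.sg x, H z = 0) →
      lam ^ (orb W.sg x).card ≠ ((W.c x : ℝ) : ℂ) ^ (orb W.sg x).card →
      ∀ z ∈ orb W.sg x, y z = 0 := by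
    intro x hH0 hres z hz
    have horb : orb W.sg z = orb W.sg x := orb_eq_of_mem hz
    have h1 := iter z (by rw [horb]; exact hH0) ((orb W.sg z).card)
    rw [pow_card_orb] at h1
    have hcz : W.c z = W.c x := W.c_inv horb
    rw [horb, hcz] at h1
    by_contra hyz
    exact hres (mul_right_cancel₀ hyz h1)
  -- uniqueness of the resonant orbit
  have res_unique : ∀ x z : Q,
      lam ^ (orb W.sg x).card = ((W.c x : ℝ) : ℂ) ^ (orb W.sg x).card →
      lam ^ (orb W.sg z).card = ((W.c z : ℝ) : ℂ) ^ (orb W.sg z).card →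
      orb W.sg x = orb W.sg z := by
    intro x z hx hz
    apply W.orb_eq_of_c_eq
    have key : ∀ w : Q, lam ^ (orb W.sg w).card = ((W.c w : ℝ) : ℂ) ^ (orb W.sg w).card →
        W.c w = ‖lam‖ := by
      intro w hw
      have h1 := congrArg (fun z : ℂ => ‖z‖) hw
      rw [norm_pow, norm_pow, Complex.norm_real, Real.norm_eq_abs, _root_.abs_of_pos (W.c_pos w)] at h1
      have hcard : (orb W.sg w).card ≠ 0 := (card_orb_pos W.sg w).ne'
      rcases lt_trichotomy (W.c w) ‖lam‖ with hlt | heqq | hgt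
      · exact absurd h1 (ne_of_gt (pow_lt_pow_left₀ hlt (le_of_lt (W.c_pos w)) hcard))
      · exact heqq
      · exact absurd h1 (ne_of_lt (pow_lt_pow_left₀ hgt (norm_nonneg lam) hcard))
    rw [key x hx, key z hz]
  -- downward induction principle
  have down : ∀ (Good : Q → Prop),
      (∀ q, Good q → lam ^ (orb W.sg q).card ≠ ((W.c q : ℝ) : ℂ) ^ (orb W.sg q).card) →
      (∀ q x h, Good q → x ∈ orb W.sg q → h = W.hd h → W.src h = Sum.inl x → Good h) →
      ∀ q, Good q → y q = 0 := by
    intro Good hres hclosed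
    set D := Finset.univ.sup (fun q : Q => W.dist (W.hd q)) with hD
    have hDle : ∀ q : Q, W.dist (W.hd q) ≤ D :=
      fun q => Finset.le_sup (f := fun q : Q => W.dist (W.hd q)) (Finset.mem_univ q)
    have key : ∀ m, ∀ q, Good q → D + 1 ≤ W.dist (W.hd q) + m → ∀ z ∈ orb W.sg q, y z = 0 := by
      intro m
      induction m with
      | zero =>
        intro q _ hq
        exact absurd hq (by have := hDle q; omega)
      | succ m ih =>
        intro q hGood hm z hz
        refine vanish q ?_ (hres q hGood) z hz
        intro x hx
        rw [hHdef]
        refine Finset.sum_eq_zero fun h hh => ?_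
        rw [Finset.mem_filter] at hh
        obtain ⟨-, hh1, hh2⟩ := hh
        have hGh : Good h := hclosed q x h hGood hx hh1 hh2
        have hd1 : W.dist x < W.dist (W.hd h) := by
          have h3 : W.srcAux (W.hd h) = Sum.inl x := hh2
          exact (W.srcAux_inl h3).2
        have hd2 : W.dist (W.hd q) ≤ W.dist x := (W.hd_spec q).2 x hx
        exact ih h hGh (by omega) h (orb_self _ _)
    intro q hq
    exact key (D + 1) q hq (by omega) q (orb_self _ _)
  -- all values on an orbit with a nonzero value and no source are nonzero
  have allnz : ∀ p, (∀ x ∈ orb W.sg p, H x = 0) → ∀ z0 ∈ orb W.sg p, y z0 ≠ 0 →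
      lam ≠ 0 ∧ ∀ z ∈ orb W.sg p, y z ≠ 0 := by
    intro p hH0 z0 hz0 hyz0
    have horb0 : orb W.sg z0 = orb W.sg p := orb_eq_of_mem hz0
    have hlam : lam ≠ 0 := by
      intro h0
      apply hyz0
      have hxmem : (W.sg ^ ((orb W.sg p).card - 1)) z0 ∈ orb W.sg p := by
        rw [← horb0]
        exact mem_orb_iff.mpr ⟨_, rfl⟩
      have heqx := heq ((W.sg ^ ((orb W.sg p).card - 1)) z0)
      rw [hH0 _ hxmem, add_zero, h0, zero_mul] at heqx
      have hsg : W.sg ((W.sg ^ ((orb W.sg p).card - 1)) z0) = z0 := by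
        have h2 : (W.sg ^ (orb W.sg z0).card) z0 = z0 := pow_card_orb _ _
        rw [horb0] at h2
        rw [show W.sg ((W.sg ^ ((orb W.sg p).card - 1)) z0)
            = (W.sg ^ ((orb W.sg p).card - 1 + 1)) z0 by rw [pow_succ']; rfl]
        rw [Nat.sub_add_cancel (card_orb_pos W.sg p)]
        exact h2
      rw [hsg] at heqx
      rcases mul_eq_zero.mp heqx.symm with h | h
      · exact absurd h (hc0 _)
      · exact h
    refine ⟨hlam, ?_⟩
    have hstep : ∀ k : ℕ, y ((W.sg ^ k) z0) ≠ 0 := by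
      intro k
      induction k with
      | zero => simpa using hyz0
      | succ k ih =>
        have hmem : (W.sg ^ k) z0 ∈ orb W.sg p := by
          rw [← horb0]; exact mem_orb_iff.mpr ⟨k, rfl⟩
        have hstep2 := heq ((W.sg ^ k) z0)
        rw [hH0 _ hmem, add_zero] at hstep2
        have hpow : (W.sg ^ (k+1)) z0 = W.sg ((W.sg ^ k) z0) := by rw [pow_succ']; rfl
        rw [hpow]
        intro hz
        rw [hz, mul_zero] at hstep2
        rcases mul_eq_zero.mp hstep2 with h | h
        · exact hlam h
        · exact ih h
    intro z hz
    obtain ⟨k, -, hk⟩ := mem_orb_iff_lt.mp (show z ∈ orb W.sg z0 by rw [horb0]; exact hz)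
    rw [← hk]
    exact hstep k
  -- orbits with a single source vertex carrying a nonzero source are all-nonzero
  have inhom : ∀ s : Q, (∀ x ∈ orb W.sg s, x ≠ s → H x = 0) → H s ≠ 0 →
      lam ^ (orb W.sg s).card ≠ ((W.c s : ℝ) : ℂ) ^ (orb W.sg s).card → lam ≠ 0 →
      ∀ z ∈ orb W.sg s, y z ≠ 0 := by
    intro s hoff hHs hres hlam
    have hL1 : 1 ≤ (orb W.sg s).card := card_orb_pos W.sg s
    have claim : ∀ k, k ≤ (orb W.sg s).card - 1 →
        lam ^ k * y (W.sg s) = ((W.c s : ℝ) : ℂ) ^ k * y ((W.sg ^ (k+1)) s) := by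
      intro k hk
      induction k with
      | zero => simp
      | succ k ih =>
        have hk' : k ≤ (orb W.sg s).card - 1 := by omega
        have hmem : (W.sg ^ (k+1)) s ∈ orb W.sg s := mem_orb_iff.mpr ⟨_, rfl⟩
        have hne : (W.sg ^ (k+1)) s ≠ s := by
          have hped : period W.sg s = (orb W.sg s).card := (card_orb W.sg s).symm
          exact period_min (σ := W.sg) (q := s) (by omega) (by rw [hped]; omega)
        have hstep2 := heq ((W.sg ^ (k+1)) s)
        rw [hoff _ hmem hne, add_zero, W.c_inv (orb_eq_of_mem hmem)] at hstep2
        have hpow : (W.sg ^ (k+1+1)) s = W.sg ((W.sg ^ (k+1)) s) := by rw [pow_succ']; rfl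
        calc lam ^ (k+1) * y (W.sg s) = lam * (lam ^ k * y (W.sg s)) := by ring
          _ = lam * (((W.c s : ℝ) : ℂ) ^ k * y ((W.sg ^ (k+1)) s)) := by rw [ih hk']
          _ = ((W.c s : ℝ) : ℂ) ^ k * (lam * y ((W.sg ^ (k+1)) s)) := by ring
          _ = ((W.c s : ℝ) : ℂ) ^ k * (((W.c s : ℝ) : ℂ) * y (W.sg ((W.sg ^ (k+1)) s))) := by
              rw [hstep2]
          _ = ((W.c s : ℝ) : ℂ) ^ (k+1) * y ((W.sg ^ (k+1+1)) s) := by rw [hpow]; ring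
    have hfin := claim ((orb W.sg s).card - 1) le_rfl
    have hsgL : (W.sg ^ ((orb W.sg s).card - 1 + 1)) s = s := by
      rw [Nat.sub_add_cancel hL1]; exact pow_card_orb _ _
    rw [hsgL] at hfin
    have heqs := heq s
    have e1 : lam ^ ((orb W.sg s).card - 1) * (lam * y s) = lam ^ (orb W.sg s).card * y s := by
      rw [← mul_assoc, ← pow_succ, Nat.sub_add_cancel hL1]
    have e2 : lam ^ ((orb W.sg s).card - 1) * (((W.c s : ℝ) : ℂ) * y (W.sg s))
        = ((W.c s : ℝ) : ℂ) ^ (orb W.sg s).card * y s := by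
      calc lam ^ ((orb W.sg s).card - 1) * (((W.c s : ℝ) : ℂ) * y (W.sg s))
          = ((W.c s : ℝ) : ℂ) * (lam ^ ((orb W.sg s).card - 1) * y (W.sg s)) := by ring
        _ = ((W.c s : ℝ) : ℂ) * (((W.c s : ℝ) : ℂ) ^ ((orb W.sg s).card - 1) * y s) := by
            rw [hfin]
        _ = ((W.c s : ℝ) : ℂ) ^ (orb W.sg s).card * y s := by
            rw [← mul_assoc, ← pow_succ', Nat.sub_add_cancel hL1]
    have e3 : lam ^ (orb W.sg s).card * y s
        = ((W.c s : ℝ) : ℂ) ^ (orb W.sg s).card * y s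
          + lam ^ ((orb W.sg s).card - 1) * H s := by
      rw [← e1, heqs, mul_add, e2]
    have hys : y s ≠ 0 := by
      intro h0
      rw [h0, mul_zero, mul_zero, zero_add] at e3
      rcases mul_eq_zero.mp e3.symm with h | h
      · exact pow_ne_zero _ hlam h
      · exact hHs h
    have hysg : y (W.sg s) ≠ 0 := by
      intro h0
      rw [h0, mul_zero] at hfin
      rcases mul_eq_zero.mp hfin.symm with h | h
      · exact pow_ne_zero _ (hc0 s) h
      · exact hys h
    intro z hz
    obtain ⟨k, hklt, hk⟩ := mem_orb_iff_lt.mp hz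
    cases k with
    | zero => rw [← hk]; simpa using hys
    | succ k' =>
      have hk2 : k' ≤ (orb W.sg s).card - 1 := by omega
      have hcl := claim k' hk2
      rw [hk] at hcl
      intro h0
      rw [h0, mul_zero] at hcl
      rcases mul_eq_zero.mp hcl with h | h
      · exact pow_ne_zero _ hlam h
      · exact hysg h
  by_cases hresex : ∃ qs, lam ^ (orb W.sg qs).card = ((W.c qs : ℝ) : ℂ) ^ (orb W.sg qs).card
  · obtain ⟨qs, hqs⟩ := hresex
    by_contra hy0
    obtain ⟨q0, hq0⟩ : ∃ q0, y q0 ≠ 0 := Function.ne_iff.mp hy0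
    have hyoff : ∀ q, ¬ (∃ k p, W.chain qs k = Sum.inl p ∧ orb W.sg p = orb W.sg q) →
        y q = 0 := by
      refine down (fun q => ¬ (∃ k p, W.chain qs k = Sum.inl p ∧ orb W.sg p = orb W.sg q)) ?_ ?_
      · intro q hq hres
        exact hq ⟨0, W.hd qs, W.chain_zero qs, by
          rw [orb_eq_of_mem (W.hd_spec qs).1]
          exact res_unique qs q hqs hres⟩
      · intro q x h hGood hx hhd hsrc hanc
        obtain ⟨k, p, hk, horb⟩ := hanc
        apply hGood
        refine ⟨k+1, x, ?_, orb_eq_of_mem hx⟩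
        rw [W.chain_succ_inl hk, W.src_inv horb, hsrc]
    have head_anc : ∀ h, y h ≠ 0 → h = W.hd h →
        ∃ k p, W.chain qs k = Sum.inl p ∧ orb W.sg p = orb W.sg h ∧
          (∃ z ∈ orb W.sg p, y z ≠ 0) ∧ W.src h = W.src p ∧ h = W.hd p := by
      intro h hyh hh
      by_cases hanc : ∃ k p, W.chain qs k = Sum.inl p ∧ orb W.sg p = orb W.sg h
      · obtain ⟨k, p, hk, horb⟩ := hanc
        refine ⟨k, p, hk, horb, ⟨h, by rw [horb]; exact orb_self _ _, hyh⟩,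
          (W.src_inv horb).symm, ?_⟩
        rw [hh]
        exact (W.hd_inv horb).symm
      · exact absurd (hyoff h hanc) hyh
    have hS : ∃ k, ∃ p, W.chain qs k = Sum.inl p ∧ ∃ z ∈ orb W.sg p, y z ≠ 0 := by
      by_cases hanc : ∃ k p, W.chain qs k = Sum.inl p ∧ orb W.sg p = orb W.sg q0
      · obtain ⟨k, p, hk, horb⟩ := hanc
        exact ⟨k, p, hk, q0, by rw [horb]; exact orb_self _ _, hq0⟩
      · exact absurd (hyoff q0 hanc) hq0
    obtain ⟨p0, hp0, z0, hz0mem, hz0⟩ := Nat.find_spec hS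
    have hk0le : ∀ k p, W.chain qs k = Sum.inl p → (∃ z ∈ orb W.sg p, y z ≠ 0) →
        Nat.find hS ≤ k :=
      fun k p hk hz => Nat.find_min' hS ⟨p, hk, hz⟩
    have hH0base : ∀ x ∈ orb W.sg p0, H x = 0 := by
      intro x hx
      rw [hHdef]
      refine Finset.sum_eq_zero fun h hh => ?_
      rw [Finset.mem_filter] at hh
      obtain ⟨-, hh1, hh2⟩ := hh
      by_contra hyh
      obtain ⟨k, p, hk, horb, hzk, hsrceq, hhd⟩ := head_anc h hyh hh1
      have hch : W.chain qs (k+1) = Sum.inl x := by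
        rw [W.chain_succ_inl hk, ← hsrceq, hh2]
      have hkk : k + 1 = Nat.find hS :=
        W.orb_index_unique hch hp0 (orb_eq_of_mem hx)
      have := hk0le k p hk hzk
      omega
    obtain ⟨hlam, hbase⟩ := allnz p0 hH0base z0 hz0mem hz0
    have up : ∀ j, Nat.find hS ≤ j → ∀ p, W.chain qs j = Sum.inl p →
        ∀ z ∈ orb W.sg p, y z ≠ 0 := by
      intro j
      induction j with
      | zero =>
        intro hj p hp
        rw [show Nat.find hS = 0 by omega] at hp0
        have hpeq : p = p0 := Sum.inl.inj (hp.symm.trans hp0)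
        subst hpeq
        exact hbase
      | succ j ih =>
        intro hj p' hp'
        rcases Nat.lt_or_ge j (Nat.find hS) with hlt | hge
        · have hk0eq : Nat.find hS = j + 1 := by omega
          rw [hk0eq] at hp0
          have hpeq : p' = p0 := Sum.inl.inj (hp'.symm.trans hp0)
          subst hpeq
          exact hbase
        · cases hcj : W.chain qs j with
          | inr u => rw [W.chain_succ_inr hcj] at hp'; cases hp'
          | inl p =>
            have hallp := ih hge p hcj
            have hsrcp : W.src p = Sum.inl p' := by
              rw [← W.chain_succ_inl hcj]; exact hp'
            have hHoff : ∀ x ∈ orb W.sg p', x ≠ p' → H x = 0 := by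
              intro x hx hxne
              rw [hHdef]
              refine Finset.sum_eq_zero fun h hh => ?_
              rw [Finset.mem_filter] at hh
              obtain ⟨-, hh1, hh2⟩ := hh
              by_contra hyh
              obtain ⟨k, pk, hk, horb, hzk, hsrceq, hhd⟩ := head_anc h hyh hh1
              have hch : W.chain qs (k+1) = Sum.inl x := by
                rw [W.chain_succ_inl hk, ← hsrceq, hh2]
              have hkk : k + 1 = j + 1 := W.orb_index_unique hch hp' (orb_eq_of_mem hx)
              have hkj : k = j := by omega
              subst hkj
              have hppk : pk = p := Sum.inl.inj (hk.symm.trans hcj)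
              rw [hsrceq, hppk, hsrcp] at hh2
              exact hxne (Sum.inl.inj hh2).symm
            have hsrchd : W.src (W.hd p) = W.src p := W.src_inv (orb_eq_of_mem (W.hd_spec p).1)
            have hHp' : H p' = y (W.hd p) := by
              rw [hHdef]
              apply Finset.sum_eq_single_of_mem
              · rw [Finset.mem_filter]
                exact ⟨Finset.mem_univ _, (W.hd_idem p).symm, by rw [hsrchd]; exact hsrcp⟩
              · intro h hh hne
                rw [Finset.mem_filter] at hh
                obtain ⟨-, hh1, hh2⟩ := hh
                by_contra hyh
                obtain ⟨k, pk, hk, horb, hzk, hsrceq, hhd⟩ := head_anc h hyh hh1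
                have hch : W.chain qs (k+1) = Sum.inl p' := by
                  rw [W.chain_succ_inl hk, ← hsrceq, hh2]
                have hkk : k + 1 = j + 1 := W.orb_index_unique hch hp' rfl
                have hkj : k = j := by omega
                subst hkj
                have hppk : pk = p := Sum.inl.inj (hk.symm.trans hcj)
                rw [hppk] at hhd
                exact hne (by rw [hhd])
            have hHne : H p' ≠ 0 := by
              rw [hHp']
              exact hallp (W.hd p) (W.hd_spec p).1
            have hnres : lam ^ (orb W.sg p').card ≠ ((W.c p' : ℝ) : ℂ) ^ (orb W.sg p').card := by
              intro hres
              have horbeq : orb W.sg p' = orb W.sg qs := res_unique p' qs hres hqs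
              have hj0 : (j + 1 : ℕ) = 0 := W.orb_index_unique hp' (W.chain_zero qs) (by
                rw [horbeq]
                exact (orb_eq_of_mem (W.hd_spec qs).1).symm)
              omega
            exact inhom p' hHoff hHne hnres hlam
    obtain ⟨K, pK, u, hK, hKsucc, hKall⟩ := W.chain_root qs
    have hk0K : Nat.find hS ≤ K := by
      by_contra hcon
      push_neg at hcon
      have := W.chain_inr_stable hKsucc (Nat.find hS) (by omega)
      rw [hp0] at this
      cases this
    have hallK := up K hk0K pK hK
    have hsrcK : W.src pK = Sum.inr u := by
      rw [← W.chain_succ_inl hK]; exact hKsucc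
    have hBu := hB u
    have hsplitB : ∀ q : Q, y q * ((W.B0 q u : ℝ) : ℂ)
        = (if q = W.hd q ∧ W.src q = Sum.inr u then y q else 0) := by
      intro q
      simp only [WData.B0]
      by_cases h2 : q = W.hd q ∧ W.src q = Sum.inr u
      · rw [if_pos h2, if_pos h2]; push_cast; ring
      · rw [if_neg h2, if_neg h2]; push_cast; ring
    rw [Finset.sum_congr rfl (fun q _ => hsplitB q), ← Finset.sum_filter] at hBu
    have hsrcKhd : W.src (W.hd pK) = W.src pK := W.src_inv (orb_eq_of_mem (W.hd_spec pK).1)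
    have hBval : ∑ h ∈ Finset.univ.filter (fun h => h = W.hd h ∧ W.src h = Sum.inr u), y h
        = y (W.hd pK) := by
      apply Finset.sum_eq_single_of_mem
      · rw [Finset.mem_filter]
        exact ⟨Finset.mem_univ _, (W.hd_idem pK).symm, by rw [hsrcKhd]; exact hsrcK⟩
      · intro h hh hne
        rw [Finset.mem_filter] at hh
        obtain ⟨-, hh1, hh2⟩ := hh
        by_contra hyh
        obtain ⟨k, pk, hk, horb, hzk, hsrceq, hhd⟩ := head_anc h hyh hh1
        have hchk : W.chain qs (k+1) = Sum.inr u := by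
          rw [W.chain_succ_inl hk, ← hsrceq, hh2]
        have hkK1 : ¬ (k + 1 ≤ K) := by
          intro hle
          obtain ⟨p', hp'⟩ := hKall (k+1) hle
          rw [hchk] at hp'
          cases hp'
        have hkK2 : k ≤ K := by
          by_contra hgt
          push_neg at hgt
          have := W.chain_inr_stable hKsucc k (by omega)
          rw [hk] at this
          cases this
        have hkK : k = K := by omega
        subst hkK
        have hpkK : pk = pK := Sum.inl.inj (hk.symm.trans hK)
        rw [hpkK] at hhd
        exact hne (by rw [hhd])
    rw [hBval] at hBu
    exact hallK (W.hd pK) (W.hd_spec pK).1 hBu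
  · push_neg at hresex
    funext q
    exact down (fun _ => True) (fun q _ => hresex q) (fun _ _ _ _ _ _ _ => trivial) q trivial


theorem exists_controllable (W : WData Q U) :
    ∃ A0 : Matrix Q Q ℝ, ∃ B0 : Matrix Q U ℝ,
      (∀ q q', A0 q q' ≠ 0 → W.Ap q q' = true) ∧
      (∀ q u, B0 q u ≠ 0 → W.Bp q u = true) ∧ Controllable A0 B0 :=
  ⟨W.A0, W.B0, fun _ _ h => W.A0_support h, fun _ _ h => W.B0_support h,
    controllable_of_no_left_eigvec _ _ (fun lam y h1 h2 => W.main_eig lam y h1 h2)⟩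

end WData

end SCWitness

section PartIV

open Matrix

variable {Q U : Type*} [Fintype Q] [DecidableEq Q] [Fintype U]

lemma det_gram_ne_zero_iff_rank (C : Matrix Q (Fin (Fintype.card Q) × U) ℝ) :
    (C * Cᵀ).det ≠ 0 ↔ C.rank = Fintype.card Q := by
  constructor
  · intro h
    have hu : IsUnit (C * Cᵀ) := (Matrix.isUnit_iff_isUnit_det _).mpr (isUnit_iff_ne_zero.mpr h)
    have h1 : (C * Cᵀ).rank = Fintype.card Q := Matrix.rank_of_isUnit _ hu
    have h2 : (C * Cᵀ).rank ≤ C.rank := Matrix.rank_mul_le_left C Cᵀ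
    have h3 : C.rank ≤ Fintype.card Q := C.rank_le_card_height
    omega
  · intro h
    have h1 : (C * Cᵀ).rank = Fintype.card Q := by
      rw [Matrix.rank_self_mul_transpose, h]
    intro hdet0
    obtain ⟨v, hv0, hvec⟩ := (Matrix.exists_mulVec_eq_zero_iff).mpr hdet0
    have hker : LinearMap.ker (C * Cᵀ).mulVecLin ≠ ⊥ := by
      apply Submodule.ne_bot_iff _ |>.mpr
      exact ⟨v, by rw [LinearMap.mem_ker, Matrix.mulVecLin_apply]; exact hvec, hv0⟩
    have hrn := LinearMap.finrank_range_add_finrank_ker (C * Cᵀ).mulVecLin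
    rw [Module.finrank_pi] at hrn
    have hker0 : Module.finrank ℝ (LinearMap.ker (C * Cᵀ).mulVecLin) ≠ 0 := by
      intro h0
      exact hker (Submodule.finrank_eq_zero.mp h0)
    rw [Matrix.rank] at h1
    omega

theorem struct_controllable_of_witness [DecidableEq U]
    (Ab : Matrix Q Q Bool) (Bb : Matrix Q U Bool)
    (A0 : Matrix Q Q ℝ) (B0 : Matrix Q U ℝ)
    (hA : ∀ q q', A0 q q' ≠ 0 → Ab q q' = true)
    (hB : ∀ q u, B0 q u ≠ 0 → Bb q u = true)
    (hc : Controllable A0 B0) : StructurallyControllable Ab Bb := by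
  classical
  set Apoly : Matrix Q Q (MvPolynomial ((Q × Q) ⊕ (Q × U)) ℝ) :=
    fun q q' => if Ab q q' = true then MvPolynomial.X (Sum.inl (q, q')) else 0 with hApoly
  set Bpoly : Matrix Q U (MvPolynomial ((Q × Q) ⊕ (Q × U)) ℝ) :=
    fun q u => if Bb q u = true then MvPolynomial.X (Sum.inr (q, u)) else 0 with hBpoly
  set Cpoly : Matrix Q (Fin (Fintype.card Q) × U) (MvPolynomial ((Q × Q) ⊕ (Q × U)) ℝ) :=
    fun i kj => (Apoly ^ (kj.1 : ℕ) * Bpoly) i kj.2 with hCpoly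
  -- evaluation commutes
  have evalC : ∀ v : ((Q × Q) ⊕ (Q × U)) → ℝ,
      Cpoly.map (MvPolynomial.eval v) =
        ctrbMatrix (Apoly.map (MvPolynomial.eval v)) (Bpoly.map (MvPolynomial.eval v)) := by
    intro v
    funext i kj
    have hpow : (Apoly ^ (kj.1 : ℕ)).map (MvPolynomial.eval v)
        = (Apoly.map (MvPolynomial.eval v)) ^ (kj.1 : ℕ) := by
      have := map_pow ((MvPolynomial.eval v).mapMatrix (m := Q)) Apoly (kj.1 : ℕ)
      simpa [RingHom.mapMatrix_apply] using this
    calc Cpoly.map (MvPolynomial.eval v) i kj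
        = ((Apoly ^ (kj.1 : ℕ) * Bpoly).map (MvPolynomial.eval v)) i kj.2 := rfl
      _ = ((Apoly.map (MvPolynomial.eval v)) ^ (kj.1 : ℕ)
            * Bpoly.map (MvPolynomial.eval v)) i kj.2 := by
          rw [Matrix.map_mul, hpow]
      _ = ctrbMatrix (Apoly.map (MvPolynomial.eval v)) (Bpoly.map (MvPolynomial.eval v)) i kj :=
          rfl
  have hdet : ∀ v : ((Q × Q) ⊕ (Q × U)) → ℝ,
      MvPolynomial.eval v (Cpoly * Cpolyᵀ).det
        = ((Cpoly.map (MvPolynomial.eval v)) * (Cpoly.map (MvPolynomial.eval v))ᵀ).det := by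
    intro v
    rw [RingHom.map_det]
    congr 1
    rw [RingHom.mapMatrix_apply, Matrix.map_mul, Matrix.transpose_map]
  -- the witness point
  set v0 : ((Q × Q) ⊕ (Q × U)) → ℝ := fun i => match i with
    | Sum.inl e => A0 e.1 e.2
    | Sum.inr e => B0 e.1 e.2 with hv0def
  have hA0 : Apoly.map (MvPolynomial.eval v0) = A0 := by
    funext q q'
    simp only [Matrix.map_apply]; simp only [hApoly]
    by_cases hb : Ab q q' = true
    · rw [if_pos hb, MvPolynomial.eval_X]
    · rw [if_neg hb, map_zero]
      by_contra h0
      exact hb (hA q q' (fun hz => h0 hz.symm))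
  have hB0 : Bpoly.map (MvPolynomial.eval v0) = B0 := by
    funext q u
    simp only [Matrix.map_apply]; simp only [hBpoly]
    by_cases hb : Bb q u = true
    · rw [if_pos hb, MvPolynomial.eval_X]
    · rw [if_neg hb, map_zero]
      by_contra h0
      exact hb (hB q u (fun hz => h0 hz.symm))
  have hGv0 : MvPolynomial.eval v0 (Cpoly * Cpolyᵀ).det ≠ 0 := by
    rw [hdet v0, evalC v0, hA0, hB0]
    exact (det_gram_ne_zero_iff_rank _).mpr hc
  have hGne : (Cpoly * Cpolyᵀ).det ≠ 0 := by
    intro h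
    rw [h, map_zero] at hGv0
    exact hGv0 rfl
  set P : MvPolynomial ((Q × Q) ⊕ (Q × U)) ℝ := (Cpoly * Cpolyᵀ).det
    * (∏ e ∈ Finset.univ.filter (fun e : Q × Q => Ab e.1 e.2 = true),
        MvPolynomial.X (Sum.inl e))
    * (∏ e ∈ Finset.univ.filter (fun e : Q × U => Bb e.1 e.2 = true),
        MvPolynomial.X (Sum.inr e)) with hPdef
  have hPne : P ≠ 0 := by
    refine mul_ne_zero (mul_ne_zero hGne ?_) ?_ <;>
      exact Finset.prod_ne_zero_iff.mpr fun e _ => MvPolynomial.X_ne_zero _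
  obtain ⟨v, hv⟩ : ∃ v, MvPolynomial.eval v P ≠ 0 := by
    by_contra h
    push_neg at h
    exact hPne (MvPolynomial.funext fun x => by rw [h x, map_zero])
  rw [hPdef, _root_.map_mul, _root_.map_mul] at hv
  obtain ⟨⟨hv1, hv2⟩, hv3⟩ : (MvPolynomial.eval v (Cpoly * Cpolyᵀ).det ≠ 0
      ∧ MvPolynomial.eval v (∏ e ∈ Finset.univ.filter (fun e : Q × Q => Ab e.1 e.2 = true),
          MvPolynomial.X (Sum.inl e)) ≠ 0)
      ∧ MvPolynomial.eval v (∏ e ∈ Finset.univ.filter (fun e : Q × U => Bb e.1 e.2 = true),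
          MvPolynomial.X (Sum.inr e)) ≠ 0 := by
    rw [← mul_ne_zero_iff, ← mul_ne_zero_iff]
    exact hv
  rw [map_prod] at hv2 hv3
  refine ⟨Apoly.map (MvPolynomial.eval v), Bpoly.map (MvPolynomial.eval v), ?_, ?_, ?_⟩
  · intro q q'
    simp only [Matrix.map_apply]; simp only [hApoly]
    by_cases hb : Ab q q' = true
    · rw [if_pos hb, MvPolynomial.eval_X]
      have := Finset.prod_ne_zero_iff.mp hv2 (q, q')
        (Finset.mem_filter.mpr ⟨Finset.mem_univ _, hb⟩)
      rw [MvPolynomial.eval_X] at this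
      simp [this, hb]
    · rw [if_neg hb, map_zero]
      simp only [Bool.not_eq_true] at hb
      simp [hb]
  · intro q u
    simp only [Matrix.map_apply]; simp only [hBpoly]
    by_cases hb : Bb q u = true
    · rw [if_pos hb, MvPolynomial.eval_X]
      have := Finset.prod_ne_zero_iff.mp hv3 (q, u)
        (Finset.mem_filter.mpr ⟨Finset.mem_univ _, hb⟩)
      rw [MvPolynomial.eval_X] at this
      simp [this, hb]
    · rw [if_neg hb, map_zero]
      simp only [Bool.not_eq_true] at hb
      simp [hb]
  · rw [Controllable, ← evalC v]
    rw [hdet v] at hv1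
    exact (det_gram_ne_zero_iff_rank _).mp hv1

end PartIV

section PartI

lemma reach_from_input {X V : Type*} [Finite X] [Finite V]
    (Ab : Matrix X X Bool) (Bb : Matrix X V Bool)
    (hscc : ∀ S : Set (X ⊕ V), IsSCC (sysDigraphRel Ab Bb) S →
      NonTopLinked (sysDigraphRel Ab Bb) S → ∀ v ∈ S, ∃ u, v = Sum.inr u) :
    ∀ v : X ⊕ V, ∃ u : V, Relation.ReflTransGen (sysDigraphRel Ab Bb) (Sum.inr u) v := by
  have main : ∀ n (v : X ⊕ V),
      {w | Relation.ReflTransGen (sysDigraphRel Ab Bb) w v}.ncard ≤ n →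
      ∃ u : V, Relation.ReflTransGen (sysDigraphRel Ab Bb) (Sum.inr u) v := by
    intro n
    induction n with
    | zero =>
      intro v hv
      exfalso
      have h1 : 0 < {w | Relation.ReflTransGen (sysDigraphRel Ab Bb) w v}.ncard := by
        rw [Set.ncard_pos (Set.toFinite _)]
        exact ⟨v, Relation.ReflTransGen.refl⟩
      omega
    | succ n ih =>
      intro v hv
      set S : Set (X ⊕ V) := {w | Relation.ReflTransGen (sysDigraphRel Ab Bb) w v ∧
        Relation.ReflTransGen (sysDigraphRel Ab Bb) v w} with hS
      have hvS : v ∈ S := ⟨Relation.ReflTransGen.refl, Relation.ReflTransGen.refl⟩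
      have hSCC : IsSCC (sysDigraphRel Ab Bb) S := by
        refine ⟨⟨v, hvS⟩, ?_, ?_⟩
        · intro a ha b hb
          exact ha.1.trans hb.2
        · intro w hw
          have h2 := hw v hvS
          exact ⟨h2.2, h2.1⟩
      by_cases hnt : NonTopLinked (sysDigraphRel Ab Bb) S
      · obtain ⟨u, hu⟩ := hscc S hSCC hnt v hvS
        exact ⟨u, by rw [← hu]⟩
      · rw [NonTopLinked] at hnt
        push_neg at hnt
        obtain ⟨a, b, hab, hbS, haS⟩ := hnt
        have hav : Relation.ReflTransGen (sysDigraphRel Ab Bb) a v :=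
          Relation.ReflTransGen.head hab hbS.1
        have hsubset : {w | Relation.ReflTransGen (sysDigraphRel Ab Bb) w a}
            ⊂ {w | Relation.ReflTransGen (sysDigraphRel Ab Bb) w v} := by
          constructor
          · intro w hw
            exact Relation.ReflTransGen.trans hw hav
          · intro hcon
            have h3 : Relation.ReflTransGen (sysDigraphRel Ab Bb) v a :=
              hcon (show v ∈ {w | Relation.ReflTransGen (sysDigraphRel Ab Bb) w v} from
                Relation.ReflTransGen.refl)
            exact haS ⟨hav, h3⟩
        have hlt := Set.ncard_lt_ncard hsubset (Set.toFinite _)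
        obtain ⟨u, hu⟩ := ih a (by omega)
        exact ⟨u, hu.trans hav⟩
  intro v
  exact main _ v le_rfl

lemma reachN_of_reflTransGen {Q V : Type*} (Ab : Matrix Q Q Bool) (Bb : Matrix Q V Bool)
    {u : V} {v : Q ⊕ V} (h : Relation.ReflTransGen (sysDigraphRel Ab Bb) (Sum.inr u) v) :
    v = Sum.inr u ∨ ∃ x m, v = Sum.inl x ∧
      SCWitness.ReachN (fun a b => Ab a b) (fun a k => Bb a k) m x := by
  induction h with
  | refl => exact Or.inl rfl
  | @tail b c hab hbc ih =>
    right
    cases c with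
    | inr u' => exact absurd hbc (by cases b <;> simp [sysDigraphRel])
    | inl x =>
      rcases ih with rfl | ⟨x', m, rfl, hre⟩
      · exact ⟨x, 0, rfl, ⟨u, hbc⟩⟩
      · exact ⟨x, m + 1, rfl, ⟨x', hre, hbc⟩⟩

end PartI


/-- Lemma 3 of the paper: sufficient conditions for structural
controllability of an interconnected system.  If there are maximum matchings `M i` of the
state bipartite graphs `B(Ā_i)` such that (1) every non-top linked SCC of each subsystem
digraph `D(Ā_j, B̄_j)` consists of input vertices, and (2) the auxiliary bipartite graph on
the unmatched vertices admits a perfect matching, then `(Ā, B̄)` is structurally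
controllable. -/
theorem interconnected_struct_controllable_of_matchings
    {r : ℕ} {n p : Fin r → ℕ}
    (A : ∀ i, Matrix (Fin (n i)) (Fin (n i)) Bool)
    (B : ∀ i, Matrix (Fin (n i)) (Fin (p i)) Bool)
    (E : ∀ i j, Matrix (Fin (n i)) (Fin (n j)) Bool)
    (M : ∀ i, Set (Fin (n i) × Fin (n i)))
    (hmax : ∀ i, IsMaxMatching (stateBipEdge (A i)) (M i))
    (hscc : ∀ j : Fin r, ∀ S : Set (Fin (n j) ⊕ Fin (p j)),
      IsSCC (sysDigraphRel (A j) (B j)) S → NonTopLinked (sysDigraphRel (A j) (B j)) S →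
      ∀ v ∈ S, ∃ u : Fin (p j), v = Sum.inr u)
    (hperf : ∃ M' : Set ((Σ i, Fin (n i)) × (Σ i, Fin (n i))),
      IsMatching (crossEdge E M) M' ∧
      (∀ q : Σ i, Fin (n i), q.2 ∈ leftUnmatched (M q.1) → q ∉ leftUnmatched M') ∧
      (∀ q : Σ i, Fin (n i), q.2 ∈ rightUnmatched (M q.1) → q ∉ rightUnmatched M')) :
    StructurallyControllable (interA A E) (interB B) := by
  classical
  letI : LinearOrder (Σ i, Fin (n i)) :=
    LinearOrder.lift' (fun q => Fintype.equivFin (Σ i, Fin (n i)) q) (Equiv.injective _)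
  obtain ⟨M', hM'match, hM'L, hM'R⟩ := hperf
  obtain ⟨hM'E, hM'left, hM'right⟩ := hM'match
  have hMmatch : ∀ i, IsMatching (stateBipEdge (A i)) (M i) := fun i => (hmax i).1
  have exF2 : ∀ q : (Σ i, Fin (n i)), ¬ (∃ b, (q.2, b) ∈ M q.1) →
      ∃ e, e ∈ M' ∧ e.1 = q := by
    intro q h
    have hlu : q.2 ∈ leftUnmatched (M q.1) := by
      intro e he heq
      exact h ⟨e.2, by
        rw [show ((q.2 : Fin (n q.1)), e.2) = e from Prod.ext heq.symm rfl]
        exact he⟩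
    have h2 := hM'L q hlu
    simp only [leftUnmatched, Set.mem_setOf_eq, not_forall] at h2
    obtain ⟨e, he, hne⟩ := h2
    exact ⟨e, he, not_not.mp hne⟩
  set F : (Σ i, Fin (n i)) → (Σ i, Fin (n i)) := fun q =>
    if h : ∃ b, (q.2, b) ∈ M q.1 then ⟨q.1, Classical.choose h⟩
    else (Classical.choose (exF2 q h)).2 with hF
  -- key components of the "else" branch
  have hFneg : ∀ (q : Σ i, Fin (n i)) (h : ¬ ∃ b, (q.2, b) ∈ M q.1),
      ∃ e, e ∈ M' ∧ e.1 = q ∧ F q = e.2 := by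
    intro q h
    obtain ⟨he, he1⟩ := Classical.choose_spec (exF2 q h)
    exact ⟨_, he, he1, by rw [hF]; simp only; rw [dif_neg h]⟩
  -- the edge property
  have hedge : ∀ q, interA A E (F q) q = true := by
    intro q
    by_cases h : ∃ b, (q.2, b) ∈ M q.1
    · have hFq : F q = ⟨q.1, Classical.choose h⟩ := by
        rw [hF]; simp only; rw [dif_pos h]
      rw [hFq]
      have hb := (hMmatch q.1).1 _ (Classical.choose_spec h)
      rw [stateBipEdge] at hb
      obtain ⟨i, a⟩ := q
      simpa [interA] using hb
    · obtain ⟨e, he, he1, hFq⟩ := hFneg q h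
      rw [hFq]
      obtain ⟨hne, -, -, hE⟩ := hM'E e he
      rw [he1] at hne hE
      simp only [interA]
      rw [dif_neg (fun h2 => hne h2.symm)]
      exact hE
  -- right-matched targets of the two branches are disjoint in kind
  have hinj : Function.Injective F := by
    intro q1 q2 heqF
    by_cases h1 : ∃ b, (q1.2, b) ∈ M q1.1 <;> by_cases h2 : ∃ b, (q2.2, b) ∈ M q2.1
    · have hF1 : F q1 = ⟨q1.1, Classical.choose h1⟩ := by
        rw [hF]; simp only; rw [dif_pos h1]
      have hF2 : F q2 = ⟨q2.1, Classical.choose h2⟩ := by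
        rw [hF]; simp only; rw [dif_pos h2]
      rw [hF1, hF2] at heqF
      obtain ⟨i1, a1⟩ := q1
      obtain ⟨i2, a2⟩ := q2
      obtain ⟨hi, hb⟩ := Sigma.mk.inj_iff.mp heqF
      subst hi
      have hb' := eq_of_heq hb
      have hm1 := Classical.choose_spec h1
      have hm2 := Classical.choose_spec h2
      rw [hb'] at hm1
      have hprod := (hMmatch i1).2.2 _ hm1 _ hm2 rfl
      have ha : a1 = a2 := congrArg Prod.fst hprod
      rw [ha]
    · exfalso
      have hF1 : F q1 = ⟨q1.1, Classical.choose h1⟩ := by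
        rw [hF]; simp only; rw [dif_pos h1]
      obtain ⟨e, he, he1, hF2⟩ := hFneg q2 h2
      obtain ⟨el, er⟩ := e
      obtain ⟨i2', b2'⟩ := er
      obtain ⟨-, -, hru, -⟩ := hM'E _ he
      simp only at hru
      rw [hF1, hF2] at heqF
      simp only at heqF
      obtain ⟨hi, hb⟩ := Sigma.mk.inj_iff.mp heqF.symm
      subst hi
      have hb' := eq_of_heq hb
      have hm1 := Classical.choose_spec h1
      exact hru (q1.2, Classical.choose h1) hm1 hb'.symm
    · exfalso
      have hF2 : F q2 = ⟨q2.1, Classical.choose h2⟩ := by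
        rw [hF]; simp only; rw [dif_pos h2]
      obtain ⟨e, he, he1, hF1⟩ := hFneg q1 h1
      obtain ⟨el, er⟩ := e
      obtain ⟨i1', b1'⟩ := er
      obtain ⟨-, -, hru, -⟩ := hM'E _ he
      simp only at hru
      rw [hF1, hF2] at heqF
      simp only at heqF
      obtain ⟨hi, hb⟩ := Sigma.mk.inj_iff.mp heqF
      subst hi
      have hb' := eq_of_heq hb
      have hm2 := Classical.choose_spec h2
      exact hru (q2.2, Classical.choose h2) hm2 hb'.symm
    · obtain ⟨e1, he1, he11, hF1⟩ := hFneg q1 h1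
      obtain ⟨e2, he2, he21, hF2⟩ := hFneg q2 h2
      rw [hF1, hF2] at heqF
      have := hM'right e1 he1 e2 he2 heqF
      rw [← he11, ← he21, this]
  have hsurj : Function.Surjective F := by
    intro t
    by_cases hb : ∃ a, ((a, t.2) : Fin (n t.1) × Fin (n t.1)) ∈ M t.1
    · obtain ⟨a, ha⟩ := hb
      refine ⟨⟨t.1, a⟩, ?_⟩
      have hcond : ∃ b, ((⟨t.1, a⟩ : Σ i, Fin (n i)).2, b) ∈ M t.1 := ⟨t.2, ha⟩
      have hFq : F ⟨t.1, a⟩ = ⟨t.1, Classical.choose hcond⟩ := by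
        rw [hF]; simp only; rw [dif_pos hcond]
      rw [hFq]
      have hm := Classical.choose_spec hcond
      have hprod := (hMmatch t.1).2.1 _ hm _ ha rfl
      have hbeq : Classical.choose hcond = t.2 := congrArg Prod.snd hprod
      rw [hbeq]
    · have hru : t.2 ∈ rightUnmatched (M t.1) := by
        intro e he heq
        exact hb ⟨e.1, by
          rw [show ((e.1 : Fin (n t.1)), t.2) = e from Prod.ext rfl heq.symm]
          exact he⟩
      have h2 := hM'R t hru
      simp only [rightUnmatched, Set.mem_setOf_eq, not_forall] at h2
      obtain ⟨e, he, hne⟩ := h2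
      have he2 : e.2 = t := not_not.mp hne
      refine ⟨e.1, ?_⟩
      have hcond : ¬ ∃ b, (e.1.2, b) ∈ M e.1.1 := by
        obtain ⟨-, hlu, -, -⟩ := hM'E e he
        intro ⟨b, hbm⟩
        exact hlu (e.1.2, b) hbm rfl
      obtain ⟨f, hf, hf1, hFq⟩ := hFneg e.1 hcond
      rw [hFq]
      have := hM'left f hf e he hf1
      rw [this, he2]
  -- reachability of every state vertex
  have hreach : ∀ q : (Σ i, Fin (n i)),
      ∃ m, SCWitness.ReachN (fun a b => interA A E a b) (fun a k => interB B a k) m q := by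
    intro q
    obtain ⟨j, x⟩ := q
    obtain ⟨u, hu⟩ := reach_from_input (A j) (B j)
      (fun S h1 h2 v hv => hscc j S h1 h2 v hv) (Sum.inl x)
    have hlift : Relation.ReflTransGen (sysDigraphRel (interA A E) (interB B))
        (Sum.inr ⟨j, u⟩) (Sum.inl ⟨j, x⟩) := by
      have hstep : ∀ a b : Fin (n j) ⊕ Fin (p j), sysDigraphRel (A j) (B j) a b →
          sysDigraphRel (interA A E) (interB B)
            (Sum.map (fun a : Fin (n j) => (⟨j, a⟩ : Σ i, Fin (n i)))
              (fun k : Fin (p j) => (⟨j, k⟩ : Σ i, Fin (p i))) a)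
            (Sum.map (fun a : Fin (n j) => (⟨j, a⟩ : Σ i, Fin (n i)))
              (fun k : Fin (p j) => (⟨j, k⟩ : Σ i, Fin (p i))) b) := by
        intro a b hab
        cases a <;> cases b <;>
          simp only [sysDigraphRel, Sum.map, Function.comp] at hab ⊢ <;>
          first
          | exact hab.elim
          | (simp [interA]; exact hab)
          | (simp [interB]; exact hab)
      exact Relation.ReflTransGen.lift (Sum.map (fun a : Fin (n j) => (⟨j, a⟩ : Σ i, Fin (n i)))
          (fun k : Fin (p j) => (⟨j, k⟩ : Σ i, Fin (p i)))) hstep _ _ hu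
    rcases reachN_of_reflTransGen _ _ hlift with h | ⟨x', m, hx, hre⟩
    · cases h
    · have hxx : x' = ⟨j, x⟩ := (Sum.inl.inj hx).symm
      rw [hxx] at hre
      exact ⟨m, hre⟩
  -- assemble the witness data and conclude
  let W : SCWitness.WData (Σ i, Fin (n i)) (Σ i, Fin (p i)) :=
    { Ap := fun a b => interA A E a b
      Bp := fun a k => interB B a k
      sg := Equiv.ofBijective F ⟨hinj, hsurj⟩
      hsg := hedge
      hre := hreach
      f := fun q => (Fintype.equivFin (Σ i, Fin (n i)) q : ℕ)
      hf := fun a b hab => (Fintype.equivFin _).injective (Fin.val_injective hab) }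
  obtain ⟨A0, B0, hA0, hB0, hc⟩ := W.exists_controllable
  exact struct_controllable_of_witness (interA A E) (interB B) A0 B0 hA0 hB0 hc
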